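/- For every z ∈ ℝ^M, every real λ ≠ 0 and every μ ∈ ℝ: det(T(z,λ)^m − μ·I_M) = Π_{j=1}^{m} det(L_j(λ^m) − μ·I_N); moreover all the factors are mutually equal, i.e. det(L_i(λ') − μ·I_N) = det(L_j(λ') − μ·I_N) for all 1 ≤ i, j ≤ m and every real λ' ≠ 0. -/

import Mathlib

open Matrix

open Fin.NatCast in
/-- The periodic Bogoyavlensky Lax matrix
`T(z,λ) = λ^{1−m} Σ_k z_k E_{k,k+m−1} + λ Σ_k E_{k+1,k}` (indices mod M), real λ. -/
noncomputable def Tm (m M : ℕ) [NeZero M] (z : Fin M → ℝ) (lam : ℝ) :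
    Matrix (Fin M) (Fin M) ℝ :=
  lam ^ ((1 : ℤ) - (m : ℤ)) • (∑ k : Fin M, Matrix.single k (k + ((m - 1 : ℕ) : Fin M)) (z k))
    + lam • ∑ k : Fin M, Matrix.single (k + 1) k 1

open Fin.NatCast in
/-- `v_k^{(j)} = z_{m(k−1)+j}` (here `k : Fin N` is 0-based, `j` is 1-based). -/
def vv (m : ℕ) (N M : ℕ) [NeZero M] (z : Fin M → ℝ) (j : ℕ) (k : Fin N) : ℝ :=
  z ((m * k.val + (j - 1) : ℕ) : Fin M)

/-- `U_1(λ) = λ Σ_k E_{k+1,k} + Σ_k v_k^{(1)} E_{kk}` (indices mod N). -/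
noncomputable def U1 (m N M : ℕ) [NeZero N] [NeZero M] (z : Fin M → ℝ) (lam : ℝ) :
    Matrix (Fin N) (Fin N) ℝ :=
  lam • (∑ k : Fin N, Matrix.single (k + 1) k 1)
    + ∑ k : Fin N, Matrix.single k k (vv m N M z 1 k)

/-- `V_j(λ) = I + λ⁻¹ Σ_k v_k^{(j)} E_{k,k+1}` (indices mod N, `j` 1-based). -/
noncomputable def Vm (m N M : ℕ) [NeZero N] [NeZero M] (z : Fin M → ℝ) (j : ℕ) (lam : ℝ) :
    Matrix (Fin N) (Fin N) ℝ :=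
  1 + lam⁻¹ • ∑ k : Fin N, Matrix.single k (k + 1) (vv m N M z j k)

/-- `L_j(λ) = V_j ⬝ ⋯ ⬝ V_2 ⬝ U_1 ⬝ V_m ⬝ ⋯ ⬝ V_{j+1}` (`j` 1-based, `1 ≤ j ≤ m`). -/
noncomputable def Lm (m N M : ℕ) [NeZero N] [NeZero M] (z : Fin M → ℝ) (j : ℕ) (lam : ℝ) :
    Matrix (Fin N) (Fin N) ℝ :=
  (((List.range' 2 (j - 1)).reverse.map (fun t => Vm m N M z t lam)).prod)
    * U1 m N M z lam
    * (((List.range' (j + 1) (m - j)).reverse.map (fun t => Vm m N M z t lam)).prod)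

open Fin.NatCast Fin.CommRing

/-! ### Auxiliary development -/

namespace Stmt16Aux

/-- `det (A*B - μ•1) = det (B*A - μ•1)` over the reals. -/
lemma det_mul_sub_comm {N : ℕ} (A B : Matrix (Fin N) (Fin N) ℝ) (μ : ℝ) :
    (A * B - μ • (1 : Matrix (Fin N) (Fin N) ℝ)).det
      = (B * A - μ • (1 : Matrix (Fin N) (Fin N) ℝ)).det := by
  rcases eq_or_ne μ 0 with h | h
  · simp [h, Matrix.det_mul, mul_comm]
  · have hc : (-μ) ≠ 0 := neg_ne_zero.mpr h
    have key : ∀ X Y : Matrix (Fin N) (Fin N) ℝ,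
        (-μ) • (1 + ((-μ)⁻¹ • X) * Y)
          = X * Y - μ • (1 : Matrix (Fin N) (Fin N) ℝ) := by
      intro X Y
      rw [Matrix.smul_mul, smul_add, smul_smul, mul_inv_cancel₀ hc, one_smul, neg_smul]
      abel
    rw [← key A B, ← key B A, Matrix.det_smul, Matrix.det_smul,
      Matrix.det_one_add_mul_comm, Matrix.mul_smul, ← Matrix.smul_mul]

/-- cyclic index embedding `Fin N × Fin m → Fin M`, `(k,c) ↦ m k + c`. -/
def iot (m M : ℕ) [NeZero M] (k c : ℕ) : Fin M := ((m * k + c : ℕ) : Fin M)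

section iot

variable {m N M : ℕ} [NeZero M] (hM : M = m * N)

include hM in
lemma iot_mod (k c : ℕ) : iot m M (k % N) c = iot m M k c := by
  unfold iot
  have h : m * k + c = (m * (k % N) + c) + M * (k / N) := by
    rw [hM]; conv_lhs => rw [← Nat.mod_add_div k N]
    ring
  rw [h]
  push_cast [Fin.natCast_self]
  ring

lemma iot_succ (k c : ℕ) : iot m M k c + 1 = iot m M k (c + 1) := by
  unfold iot
  rw [← Nat.cast_add_one, Nat.add_assoc]

lemma iot_top (k r : ℕ) : iot m M k (m + r) = iot m M (k + 1) r := by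
  unfold iot
  congr 1
  ring

lemma iot_top0 (k : ℕ) : iot m M k m = iot m M (k + 1) 0 := by
  have h := iot_top (m := m) (M := M) k 0
  simpa using h

lemma iot_shift (hm : 2 ≤ m) (k c : ℕ) :
    iot m M k c + ((m - 1 : ℕ) : Fin M) = iot m M k (c + (m - 1)) := by
  unfold iot
  rw [← Nat.cast_add, Nat.add_assoc]

include hM in
lemma iot_lt (k c : ℕ) (hk : k < N) (hc : c < m) : m * k + c < M := by
  rw [hM]
  calc m * k + c < m * k + m := by omega
  _ = m * (k + 1) := by ring
  _ ≤ m * N := Nat.mul_le_mul_left m (by omega)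

include hM in
lemma iot_inj (k k' c c' : ℕ) (hk : k < N) (hk' : k' < N) (hc : c < m) (hc' : c' < m) :
    iot m M k c = iot m M k' c' ↔ (k = k' ∧ c = c') := by
  constructor
  · intro h
    have hv : (m * k + c) % M = (m * k' + c') % M := by
      have h2 := congrArg Fin.val h
      simp only [iot, Fin.val_natCast] at h2
      exact h2
    rw [Nat.mod_eq_of_lt (iot_lt hM k c hk hc), Nat.mod_eq_of_lt (iot_lt hM k' c' hk' hc')] at hv
    have hcc : c = c' := by
      have h1 : (m * k + c) % m = c % m := Nat.mul_add_mod m k c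
      have h2 : (m * k' + c') % m = c' % m := Nat.mul_add_mod m k' c'
      rw [Nat.mod_eq_of_lt hc] at h1
      rw [Nat.mod_eq_of_lt hc'] at h2
      rw [hv] at h1
      rw [h1] at h2
      exact h2
    refine ⟨?_, hcc⟩
    have hm0 : 0 < m := by omega
    have : m * k = m * k' := by omega
    exact Nat.eq_of_mul_eq_mul_left hm0 this
  · rintro ⟨rfl, rfl⟩; rfl

end iot

section blocks

variable (m N M : ℕ) [NeZero N] [NeZero M]

/-- the N×N block of `T` sending class `c` to class `c+1`. -/
noncomputable def Cb (z : Fin M → ℝ) (lam : ℝ) (c : ℕ) : Matrix (Fin N) (Fin N) ℝ :=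
  if c = m - 1 then lam ^ ((1 : ℤ) - (m : ℤ)) • U1 m N M z (lam ^ m)
  else lam • Vm m N M z (c + 2) (lam ^ m)

end blocks

section entries

variable {m N M : ℕ} [NeZero N] [NeZero M]

lemma sum_shift_apply {M : ℕ} [NeZero M] (i j : Fin M) :
    (∑ k : Fin M, Matrix.single (k + 1) k (1 : ℝ)) i j
      = if i = j + 1 then 1 else 0 := by
  simp only [Matrix.sum_apply, Matrix.single, Matrix.of_apply]
  rw [Finset.sum_eq_single j]
  · simp [eq_comm]
  · intro b _ hb
    simp [hb]
  · simp

lemma sum_z_apply (z : Fin M → ℝ) (i j : Fin M) :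
    (∑ k : Fin M, Matrix.single k (k + ((m - 1 : ℕ) : Fin M)) (z k)) i j
      = if j = i + ((m - 1 : ℕ) : Fin M) then z i else 0 := by
  simp only [Matrix.sum_apply, Matrix.single, Matrix.of_apply]
  rw [Finset.sum_eq_single i]
  · simp [eq_comm]
  · intro b _ hb
    simp [hb]
  · simp

lemma Tm_apply (z : Fin M → ℝ) (lam : ℝ) (i j : Fin M) :
    Tm m M z lam i j
      = (if j = i + ((m - 1 : ℕ) : Fin M) then lam ^ ((1 : ℤ) - (m : ℤ)) * z i else 0)
        + (if i = j + 1 then lam else 0) := by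
  simp only [Tm, Matrix.add_apply, Matrix.smul_apply, sum_shift_apply, sum_z_apply,
    smul_eq_mul, mul_ite, mul_one, mul_zero]

lemma U1_apply (z : Fin M → ℝ) (lam : ℝ) (k k' : Fin N) :
    U1 m N M z lam k k'
      = (if k = k' + 1 then lam else 0) + (if k = k' then vv m N M z 1 k' else 0) := by
  simp only [U1, Matrix.add_apply, Matrix.smul_apply, sum_shift_apply, smul_eq_mul,
    mul_ite, mul_one, mul_zero]
  congr 1
  simp only [Matrix.sum_apply, Matrix.single, Matrix.of_apply]
  rw [Finset.sum_eq_single k']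
  · simp [eq_comm]
  · intro b _ hb
    simp [hb]
  · simp

lemma Vm_apply (z : Fin M → ℝ) (lam : ℝ) (j : ℕ) (k k' : Fin N) :
    Vm m N M z j lam k k'
      = (if k = k' then 1 else 0)
        + (if k' = k + 1 then lam⁻¹ * vv m N M z j k else 0) := by
  simp only [Vm, Matrix.add_apply, Matrix.smul_apply, Matrix.one_apply, smul_eq_mul]
  congr 1
  simp only [Matrix.sum_apply, Matrix.single, Matrix.of_apply]
  rw [Finset.sum_eq_single k]
  · simp [eq_comm, mul_comm]
  · intro b _ hb
    simp [hb]
  · simp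

end entries

section cond

variable {m N M : ℕ} [NeZero N] [NeZero M]

lemma val_add_one {N : ℕ} [NeZero N] (k : Fin N) : (k + 1).val = (k.val + 1) % N := by
  rw [Fin.val_add, Fin.val_one', Nat.add_mod_mod]

lemma condA_iff (hm : 2 ≤ m) (hN : 2 ≤ N) (hM : M = m * N)
    [NeZero m] (k k' : Fin N) (c c' : Fin m) :
    iot m M k.val c.val = iot m M k'.val c'.val + 1
      ↔ (c = c' + 1 ∧ (if c'.val = m - 1 then k = k' + 1 else k = k')) := by
  rw [iot_succ]
  have hvc : (c' + 1).val = (c'.val + 1) % m := val_add_one c'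
  by_cases hc' : c'.val = m - 1
  · have h1 : c'.val + 1 = m := by omega
    rw [h1, iot_top0, ← iot_mod hM (k'.val + 1) 0]
    rw [iot_inj hM _ _ _ _ k.isLt (Nat.mod_lt _ (by omega)) c.isLt (by omega)]
    rw [if_pos hc']
    have hk1 : (k' + 1).val = (k'.val + 1) % N := val_add_one k'
    constructor
    · rintro ⟨h2, h3⟩
      refine ⟨?_, ?_⟩
      · apply Fin.ext; rw [hvc, h1, Nat.mod_self, h3]
      · apply Fin.ext; rw [hk1, h2]
    · rintro ⟨h2, h3⟩
      have : c.val = (c'.val + 1) % m := by rw [← hvc, h2]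
      rw [h1, Nat.mod_self] at this
      exact ⟨by rw [h3, hk1], this⟩
  · have h1 : c'.val + 1 < m := by have := c'.isLt; omega
    rw [iot_inj hM _ _ _ _ k.isLt k'.isLt c.isLt h1, if_neg hc']
    constructor
    · rintro ⟨h2, h3⟩
      exact ⟨Fin.ext (by rw [hvc, Nat.mod_eq_of_lt h1, h3]), Fin.ext h2⟩
    · rintro ⟨h2, h3⟩
      have : c.val = (c'.val + 1) % m := by rw [← hvc, h2]
      rw [Nat.mod_eq_of_lt h1] at this
      exact ⟨congrArg Fin.val h3, this⟩

lemma condB_iff (hm : 2 ≤ m) (hN : 2 ≤ N) (hM : M = m * N)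
    [NeZero m] (k k' : Fin N) (c c' : Fin m) :
    iot m M k'.val c'.val = iot m M k.val c.val + ((m - 1 : ℕ) : Fin M)
      ↔ (c = c' + 1 ∧ (if c'.val = m - 1 then k' = k else k' = k + 1)) := by
  rw [iot_shift hm]
  have hvc : (c' + 1).val = (c'.val + 1) % m := val_add_one c'
  by_cases hc : c.val = 0
  · rw [hc, Nat.zero_add]
    rw [iot_inj hM _ _ _ _ k'.isLt k.isLt c'.isLt (by omega)]
    constructor
    · rintro ⟨h2, h3⟩
      have hcm : c'.val = m - 1 := h3
      refine ⟨?_, by rw [if_pos hcm]; exact Fin.ext h2⟩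
      apply Fin.ext; rw [hvc, hcm, hc]
      have : m - 1 + 1 = m := by omega
      rw [this, Nat.mod_self]
    · rintro ⟨h2, h3⟩
      have hcm : c'.val = m - 1 := by
        have hcv : c.val = (c'.val + 1) % m := by rw [← hvc, h2]
        rw [hc] at hcv
        have := c'.isLt
        rcases Nat.lt_or_ge (c'.val + 1) m with h | h
        · rw [Nat.mod_eq_of_lt h] at hcv; omega
        · omega
      rw [if_pos hcm] at h3
      exact ⟨congrArg Fin.val h3, hcm⟩
  · have hsplit : c.val + (m - 1) = m + (c.val - 1) := by omega
    rw [hsplit, iot_top, ← iot_mod hM (k.val + 1) _]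
    have hk1 : (k + 1).val = (k.val + 1) % N := val_add_one k
    rw [iot_inj hM _ _ _ _ k'.isLt (Nat.mod_lt _ (by omega)) c'.isLt (by have := c.isLt; omega)]
    constructor
    · rintro ⟨h2, h3⟩
      have hlt : c'.val < m - 1 := by have := c.isLt; omega
      refine ⟨?_, by rw [if_neg (by omega)]; exact Fin.ext (by rw [hk1, h2])⟩
      apply Fin.ext
      rw [hvc, Nat.mod_eq_of_lt (by omega)]
      omega
    · rintro ⟨h2, h3⟩
      have hcv : c.val = (c'.val + 1) % m := by rw [← hvc, h2]
      have hlt : c'.val + 1 < m := by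
        rcases Nat.lt_or_ge (c'.val + 1) m with h | h
        · exact h
        · have := c'.isLt
          have : c'.val + 1 = m := by omega
          rw [this, Nat.mod_self] at hcv
          omega
      rw [Nat.mod_eq_of_lt hlt] at hcv
      rw [if_neg (by omega)] at h3
      exact ⟨by rw [h3, hk1], by omega⟩

end cond

section tentry

variable {m N M : ℕ} [NeZero N] [NeZero M]

lemma fin_succ_ne_self {N : ℕ} [NeZero N] (hN : 2 ≤ N) (k : Fin N) : k + 1 ≠ k := by
  intro h
  have := congrArg Fin.val h
  rw [val_add_one] at this
  rcases Nat.lt_or_ge (k.val + 1) N with h1 | h1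
  · rw [Nat.mod_eq_of_lt h1] at this; omega
  · have hk := k.isLt
    have h2 : k.val + 1 = N := by omega
    rw [h2, Nat.mod_self] at this
    omega

lemma T_entry (hm : 2 ≤ m) (hN : 2 ≤ N) (hM : M = m * N) [NeZero m]
    (z : Fin M → ℝ) (lam : ℝ) (hlam : lam ≠ 0)
    (k k' : Fin N) (c c' : Fin m) :
    Tm m M z lam (iot m M k.val c.val) (iot m M k'.val c'.val)
      = if c = c' + 1 then Cb m N M z lam c'.val k k' else 0 := by
  rw [Tm_apply]
  rw [if_congr (condB_iff hm hN hM k k' c c') rfl rfl,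
      if_congr (condA_iff hm hN hM k k' c c') rfl rfl]
  by_cases hcc : c = c' + 1
  · subst hcc
    simp only [eq_self_iff_true, true_and, if_true]
    by_cases hc' : c'.val = m - 1
    · -- U block
      have hc0 : (c' + 1 : Fin m).val = 0 := by
        rw [val_add_one, hc']
        have h1 : m - 1 + 1 = m := by omega
        rw [h1, Nat.mod_self]
      simp only [if_pos hc']
      unfold Cb
      simp only [if_pos hc']
      rw [Matrix.smul_apply, U1_apply, smul_eq_mul]
      have hvz : vv m N M z 1 k' = z (iot m M k'.val 0) := by
        unfold vv iot
        norm_num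
      have hzz : z (iot m M k.val (c' + 1 : Fin m).val) = z (iot m M k.val 0) := by rw [hc0]
      by_cases h1 : k = k' + 1
      · have h2 : ¬ (k' = k) := by
          intro h; rw [← h] at h1; exact fin_succ_ne_self hN k' h1.symm
        rw [if_pos h1, if_neg h2, if_pos h1, if_neg (fun h => h2 h.symm)]
        rw [zero_add, add_zero, ← zpow_natCast lam m, ← zpow_add₀ hlam]
        norm_num
      · by_cases h2 : k' = k
        · rw [if_pos h2, if_neg h1, if_neg h1, if_pos h2.symm]
          rw [hzz, hvz, h2]
          ring
        · rw [if_neg h1, if_neg h2, if_neg h1, if_neg (fun h => h2 h.symm)]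
          ring
    · -- V block
      have hcv : (c' + 1 : Fin m).val = c'.val + 1 := by
        rw [val_add_one, Nat.mod_eq_of_lt (by have := c'.isLt; omega)]
      simp only [if_neg hc']
      unfold Cb
      simp only [if_neg hc']
      rw [Matrix.smul_apply, Vm_apply, smul_eq_mul]
      have hvz : vv m N M z (c'.val + 2) k = z (iot m M k.val (c' + 1 : Fin m).val) := by
        unfold vv iot
        rw [hcv]
        norm_num
      have hlz : lam ^ ((1 : ℤ) - (m : ℤ)) = lam * (lam ^ m)⁻¹ := by
        rw [zpow_sub₀ hlam, zpow_one, zpow_natCast, div_eq_mul_inv]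
      by_cases h1 : k' = k + 1
      · have h2 : ¬ (k = k') := by
          intro h; rw [h] at h1; exact (fin_succ_ne_self hN k' h1.symm)
        rw [if_pos h1, if_neg h2, if_neg h2, if_pos h1]
        rw [hvz, hlz]
        ring
      · by_cases h2 : k = k'
        · rw [if_neg h1, if_pos h2, if_pos h2, if_neg h1]
          ring
        · rw [if_neg h1, if_neg h2, if_neg h2, if_neg h1]
          ring
  · rw [if_neg hcc]
    simp only [hcc, false_and, if_false, add_zero]

end tentry

section twisted

variable (m N : ℕ) [NeZero m] [NeZero N]

/-- twisted block matrix: class `c'` gets sent to class `c' + s`. -/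
noncomputable def twb (s : Fin m) (f : Fin m → Matrix (Fin N) (Fin N) ℝ) :
    Matrix (Fin N × Fin m) (Fin N × Fin m) ℝ :=
  Matrix.of fun p q => if p.2 = q.2 + s then f q.2 p.1 q.1 else 0

lemma twb_mul (s t : Fin m) (f g : Fin m → Matrix (Fin N) (Fin N) ℝ) :
    twb m N s f * twb m N t g = twb m N (s + t) (fun c => f (c + t) * g c) := by
  ext ⟨k, c⟩ ⟨k', c'⟩
  simp only [twb, Matrix.mul_apply, Matrix.of_apply, Fintype.sum_prod_type]
  have key : ∀ k'' : Fin N,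
      (∑ c'' : Fin m, (if c = c'' + s then f c'' k k'' else 0) *
        (if c'' = c' + t then g c' k'' k' else 0))
      = if c = c' + (s + t) then f (c' + t) k k'' * g c' k'' k' else 0 := by
    intro k''
    rw [Finset.sum_eq_single (c' + t)]
    · by_cases h : c = c' + t + s
      · rw [if_pos h, if_pos (rfl : c' + t = c' + t), if_pos (by rw [h]; ring)]
      · have h' : ¬ c = c' + (s + t) := by
          intro hh; exact h (by rw [hh]; ring)
        rw [if_neg h, zero_mul, if_neg h']
    · intro b _ hb
      rw [if_neg hb, mul_zero]
    · intro h
      exact absurd (Finset.mem_univ _) h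
  rw [Finset.sum_congr rfl (fun k'' _ => key k'')]
  by_cases h : c = c' + (s + t)
  · simp only [if_pos h]
  · simp only [if_neg h, Finset.sum_const_zero]

lemma twb_zero_eq (f : Fin m → Matrix (Fin N) (Fin N) ℝ) :
    twb m N 0 f = Matrix.blockDiagonal f := by
  ext ⟨k, c⟩ ⟨k', c'⟩
  simp only [twb, Matrix.of_apply, Matrix.blockDiagonal_apply, add_zero]
  by_cases h : c = c'
  · subst h; simp
  · rw [if_neg h, if_neg h]

lemma twb_zero_one : twb m N 0 (fun _ => (1 : Matrix (Fin N) (Fin N) ℝ)) = 1 := by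
  rw [twb_zero_eq]
  exact Matrix.blockDiagonal_one

/-- iterated blocks: `BnG n c = C (c+n-1) ⋯ C (c+1) C c`. -/
noncomputable def BnG (C : Fin m → Matrix (Fin N) (Fin N) ℝ) :
    ℕ → Fin m → Matrix (Fin N) (Fin N) ℝ
  | 0 => fun _ => 1
  | n + 1 => fun c => BnG C n (c + 1) * C c

lemma BnG_zero (C : Fin m → Matrix (Fin N) (Fin N) ℝ) (c : Fin m) :
    BnG m N C 0 c = 1 := rfl

lemma BnG_succ (C : Fin m → Matrix (Fin N) (Fin N) ℝ) (n : ℕ) (c : Fin m) :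
    BnG m N C (n + 1) c = BnG m N C n (c + 1) * C c := rfl

lemma twb_pow (C : Fin m → Matrix (Fin N) (Fin N) ℝ) (n : ℕ) :
    (twb m N 1 C) ^ n = twb m N ((n : ℕ) : Fin m) (BnG m N C n) := by
  induction n with
  | zero =>
    rw [pow_zero, Nat.cast_zero]
    exact (twb_zero_one m N).symm
  | succ n ih =>
    rw [pow_succ, ih, twb_mul]
    have h1 : ((n : ℕ) : Fin m) + 1 = ((n + 1 : ℕ) : Fin m) := by
      rw [Nat.cast_add_one]
    rw [h1]
    rfl

lemma BnG_concat (C : Fin m → Matrix (Fin N) (Fin N) ℝ) (a b : ℕ) (c : Fin m) :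
    BnG m N C (a + b) c = BnG m N C a (c + ((b : ℕ) : Fin m)) * BnG m N C b c := by
  induction b generalizing c with
  | zero => rw [Nat.add_zero, BnG_zero, Nat.cast_zero, add_zero, mul_one]
  | succ b ih =>
    rw [show a + (b + 1) = (a + b) + 1 from rfl, BnG_succ, ih (c + 1), BnG_succ]
    have h1 : c + 1 + ((b : ℕ) : Fin m) = c + ((b + 1 : ℕ) : Fin m) := by
      rw [Nat.cast_add_one]; ring
    rw [h1, mul_assoc]

end twisted

section segment

variable {m N M : ℕ} [NeZero m] [NeZero N] [NeZero M]

lemma BnG_seg (hm : 2 ≤ m) (z : Fin M → ℝ) (lam : ℝ) (a n : ℕ) (h : a + n ≤ m - 1) :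
    BnG m N (fun c' => Cb m N M z lam c'.val) n ((a : ℕ) : Fin m)
      = lam ^ n • (((List.range' (a + 2) n).reverse.map
          (fun t => Vm m N M z t (lam ^ m))).prod) := by
  induction n generalizing a with
  | zero =>
    rw [BnG_zero]
    simp
  | succ n ih =>
    have ha : (a + 1) + n ≤ m - 1 := by omega
    have hcast : ((a : ℕ) : Fin m) + 1 = ((a + 1 : ℕ) : Fin m) := by
      rw [Nat.cast_add_one]
    rw [BnG_succ, hcast, ih (a + 1) ha]
    have hv : (((a : ℕ) : Fin m)).val = a := by
      rw [Fin.val_natCast]; exact Nat.mod_eq_of_lt (by omega)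
    have hC : Cb m N M z lam a = lam • Vm m N M z (a + 2) (lam ^ m) := by
      unfold Cb
      rw [if_neg (by omega)]
    rw [hv, hC]
    have hl : (List.range' (a + 2) (n + 1)).reverse
        = (List.range' (a + 1 + 2) n).reverse ++ [a + 2] := by
      rw [List.range'_succ, show a + 2 + 1 = a + 1 + 2 by omega]
      simp
    rw [hl, List.map_append, List.prod_append]
    simp only [List.map_cons, List.map_nil, List.prod_cons, List.prod_nil, mul_one]
    rw [smul_mul_smul_comm, ← pow_succ]

lemma BnG_eq_Lm (hm : 2 ≤ m) (z : Fin M → ℝ) (lam : ℝ) (hlam : lam ≠ 0) (c : Fin m) :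
    BnG m N (fun c' => Cb m N M z lam c'.val) m c = Lm m N M z (c.val + 1) (lam ^ m) := by
  set C := fun c' : Fin m => Cb m N M z lam c'.val with hCdef
  have hcv : c.val < m := c.isLt
  have hsum : c.val + (m - c.val) = m := by omega
  have step1 : BnG m N C m c
      = BnG m N C c.val (c + ((m - c.val : ℕ) : Fin m)) * BnG m N C (m - c.val) c := by
    have h := BnG_concat m N C c.val (m - c.val) c
    rw [hsum] at h
    exact h
  have hzero : c + ((m - c.val : ℕ) : Fin m) = (0 : Fin m) := by
    have h : ((c.val : ℕ) : Fin m) + ((m - c.val : ℕ) : Fin m) = (0 : Fin m) := by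
      rw [← Nat.cast_add, hsum, Fin.natCast_self]
    rwa [Fin.cast_val_eq_self] at h
  have hsum2 : 1 + (m - 1 - c.val) = m - c.val := by omega
  have step2 : BnG m N C (m - c.val) c
      = BnG m N C 1 (c + ((m - 1 - c.val : ℕ) : Fin m)) * BnG m N C (m - 1 - c.val) c := by
    have h := BnG_concat m N C 1 (m - 1 - c.val) c
    rw [hsum2] at h
    exact h
  have htop : c + ((m - 1 - c.val : ℕ) : Fin m) = ((m - 1 : ℕ) : Fin m) := by
    have h : ((c.val : ℕ) : Fin m) + ((m - 1 - c.val : ℕ) : Fin m) = ((m - 1 : ℕ) : Fin m) := by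
      rw [← Nat.cast_add]
      congr 1
      omega
    rwa [Fin.cast_val_eq_self] at h
  have hone : ∀ x : Fin m, BnG m N C 1 x = C x := by
    intro x
    rw [BnG_succ, BnG_zero, one_mul]
  have hCm1 : C ((m - 1 : ℕ) : Fin m)
      = lam ^ ((1 : ℤ) - (m : ℤ)) • U1 m N M z (lam ^ m) := by
    have hv : (((m - 1 : ℕ) : Fin m)).val = m - 1 := by
      rw [Fin.val_natCast]; exact Nat.mod_eq_of_lt (by omega)
    simp only [hCdef, hv]
    unfold Cb
    rw [if_pos rfl]
  -- the two V-segments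
  have hseg1 : BnG m N C c.val (0 : Fin m)
      = lam ^ c.val • (((List.range' 2 c.val).reverse.map
          (fun t => Vm m N M z t (lam ^ m))).prod) := by
    have h0 := BnG_seg (m := m) (N := N) (M := M) hm z lam 0 c.val (by omega)
    rw [show ((0 : ℕ) : Fin m) = 0 from Nat.cast_zero] at h0
    rw [show (0 : ℕ) + 2 = 2 from rfl] at h0
    exact h0
  have hseg2 : BnG m N C (m - 1 - c.val) c
      = lam ^ (m - 1 - c.val) • (((List.range' (c.val + 2) (m - 1 - c.val)).reverse.map
          (fun t => Vm m N M z t (lam ^ m))).prod) := by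
    have := BnG_seg (m := m) (N := N) (M := M) hm z lam c.val (m - 1 - c.val) (by omega)
    rw [Fin.cast_val_eq_self c] at this
    exact this
  rw [step1, step2, hzero, htop, hone, hCm1, hseg1, hseg2]
  unfold Lm
  have hj1 : c.val + 1 - 1 = c.val := by omega
  have hj2 : m - (c.val + 1) = m - 1 - c.val := by omega
  rw [hj1, hj2, show c.val + 1 + 1 = c.val + 2 by omega]
  simp only [smul_mul_assoc, mul_smul_comm, smul_smul]
  have hscal : lam ^ (m - 1 - c.val) * lam ^ ((1 : ℤ) - (m : ℤ)) * lam ^ c.val = 1 := by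
    rw [← zpow_natCast lam (m - 1 - c.val), ← zpow_natCast lam c.val, ← zpow_add₀ hlam,
      ← zpow_add₀ hlam]
    rw [show ((m - 1 - c.val : ℕ) : ℤ) + ((1 : ℤ) - (m : ℤ)) + ((c.val : ℕ) : ℤ) = 0 by
      have := c.isLt; omega]
    exact zpow_zero lam
  rw [hscal, one_smul, ← mul_assoc]

end segment

section powsub

lemma submatrix_pow {α β : Type*} [Fintype α] [Fintype β] [DecidableEq α] [DecidableEq β]
    (A : Matrix β β ℝ) (e : α ≃ β) (n : ℕ) :
    (A ^ n).submatrix e e = (A.submatrix e e) ^ n := by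
  induction n with
  | zero => simp [pow_zero, Matrix.submatrix_one_equiv]
  | succ n ih => rw [pow_succ, pow_succ, ← ih, Matrix.submatrix_mul_equiv]

end powsub

end Stmt16Aux

open Stmt16Aux in
/-- `det(T(z,λ)^m − μI_M) = Π_{j=1}^m det(L_j(λ^m) − μI_N)`, and all the factors
are mutually equal. -/
theorem statement16 (m N M : ℕ) (hm : 2 ≤ m) (hN : 2 ≤ N) (hM : M = m * N)
    [NeZero N] [NeZero M]
    (z : Fin M → ℝ) (lam : ℝ) (hlam : lam ≠ 0) (μ : ℝ) :
    ((Tm m M z lam ^ m - μ • (1 : Matrix (Fin M) (Fin M) ℝ)).det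
        = ∏ j ∈ Finset.Icc 1 m,
            (Lm m N M z j (lam ^ m) - μ • (1 : Matrix (Fin N) (Fin N) ℝ)).det)
    ∧ (∀ i j : ℕ, 1 ≤ i → i ≤ m → 1 ≤ j → j ≤ m → ∀ lam' : ℝ, lam' ≠ 0 →
        (Lm m N M z i lam' - μ • (1 : Matrix (Fin N) (Fin N) ℝ)).det
          = (Lm m N M z j lam' - μ • (1 : Matrix (Fin N) (Fin N) ℝ)).det) := by
  haveI : NeZero m := ⟨by omega⟩
  constructor
  · -- part 1: block decomposition of T^m
    set C : Fin m → Matrix (Fin N) (Fin N) ℝ := fun c' => Cb m N M z lam c'.val with hC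
    -- the index equivalence
    have hbij : Function.Bijective
        (fun p : Fin N × Fin m => iot m M p.1.val p.2.val) := by
      rw [Fintype.bijective_iff_injective_and_card]
      constructor
      · intro p q hpq
        rcases (iot_inj hM p.1.val q.1.val p.2.val q.2.val
          p.1.isLt q.1.isLt p.2.isLt q.2.isLt).mp hpq with ⟨h1, h2⟩
        exact Prod.ext (Fin.ext h1) (Fin.ext h2)
      · simp [Fintype.card_prod, hM, Nat.mul_comm]
    set e : Fin N × Fin m ≃ Fin M :=
      Equiv.ofBijective _ hbij with hE
    have hTsub : (Tm m M z lam).submatrix e e = twb m N 1 C := by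
      ext ⟨k, c⟩ ⟨k', c'⟩
      show Tm m M z lam (iot m M k.val c.val) (iot m M k'.val c'.val) = _
      rw [T_entry hm hN hM z lam hlam k k' c c']
      rfl
    have hdet1 : (Tm m M z lam ^ m - μ • (1 : Matrix (Fin M) (Fin M) ℝ)).det
        = ((Tm m M z lam ^ m - μ • (1 : Matrix (Fin M) (Fin M) ℝ)).submatrix e e).det :=
      (Matrix.det_submatrix_equiv_self e _).symm
    have hsub2 : (Tm m M z lam ^ m - μ • (1 : Matrix (Fin M) (Fin M) ℝ)).submatrix e e
        = (Tm m M z lam ^ m).submatrix e e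
          - μ • (1 : Matrix (Fin N × Fin m) (Fin N × Fin m) ℝ) := by
      ext p q
      simp [Matrix.submatrix_apply, Matrix.sub_apply, Matrix.smul_apply, Matrix.one_apply,
        Equiv.apply_eq_iff_eq]
    rw [hdet1]
    rw [hsub2]
    rw [submatrix_pow _ e m]
    rw [hTsub]
    rw [twb_pow m N C m]
    rw [show ((m : ℕ) : Fin m) = 0 from Fin.natCast_self m]
    rw [twb_zero_eq m N]
    have hblocks : Matrix.blockDiagonal (BnG m N C m) - μ • (1 : Matrix (Fin N × Fin m) (Fin N × Fin m) ℝ)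
        = Matrix.blockDiagonal (fun c => BnG m N C m c - μ • (1 : Matrix (Fin N) (Fin N) ℝ)) := by
      have hone : Matrix.blockDiagonal (fun _ : Fin m => (1 : Matrix (Fin N) (Fin N) ℝ))
          = (1 : Matrix (Fin N × Fin m) (Fin N × Fin m) ℝ) := Matrix.blockDiagonal_one
      rw [show (fun c => BnG m N C m c - μ • (1 : Matrix (Fin N) (Fin N) ℝ))
          = BnG m N C m - μ • (fun _ => (1 : Matrix (Fin N) (Fin N) ℝ)) from rfl,
        Matrix.blockDiagonal_sub, Matrix.blockDiagonal_smul, hone]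
    rw [hblocks, Matrix.det_blockDiagonal]
    have hfac : ∀ c : Fin m, (BnG m N C m c - μ • (1 : Matrix (Fin N) (Fin N) ℝ)).det
        = (Lm m N M z (c.val + 1) (lam ^ m) - μ • (1 : Matrix (Fin N) (Fin N) ℝ)).det := by
      intro c
      rw [hC, BnG_eq_Lm hm z lam hlam c]
    rw [Finset.prod_congr rfl (fun c _ => hfac c)]
    have h1 : ∏ c : Fin m,
        (Lm m N M z (c.val + 1) (lam ^ m) - μ • (1 : Matrix (Fin N) (Fin N) ℝ)).det
      = ∏ j ∈ Finset.range m,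
        (Lm m N M z (j + 1) (lam ^ m) - μ • (1 : Matrix (Fin N) (Fin N) ℝ)).det :=
      Fin.prod_univ_eq_prod_range
        (fun j => (Lm m N M z (j + 1) (lam ^ m) - μ • (1 : Matrix (Fin N) (Fin N) ℝ)).det) m
    rw [h1]
    have h2 : Finset.Icc 1 m = Finset.Ico 1 (m + 1) := by
      rw [Finset.Ico_add_one_right_eq_Icc]
    rw [h2, Finset.prod_Ico_eq_prod_range]
    simp only [Nat.add_sub_cancel]
    exact Finset.prod_congr rfl (fun j _ => by rw [Nat.add_comm 1 j])
  · -- part 2: cyclic invariance of the factors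
    have key : ∀ j : ℕ, 1 ≤ j → j ≤ m → ∀ lam' : ℝ,
        (Lm m N M z j lam' - μ • (1 : Matrix (Fin N) (Fin N) ℝ)).det
          = (Lm m N M z m lam' - μ • (1 : Matrix (Fin N) (Fin N) ℝ)).det := by
      intro j hj1 hj2 lam'
      set V : ℕ → Matrix (Fin N) (Fin N) ℝ := fun t => Vm m N M z t lam' with hV
      set P : Matrix (Fin N) (Fin N) ℝ :=
        (((List.range' 2 (j - 1)).reverse.map V).prod) * U1 m N M z lam' with hP
      set Q : Matrix (Fin N) (Fin N) ℝ :=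
        ((List.range' (j + 1) (m - j)).reverse.map V).prod with hQ
      have h1 : Lm m N M z j lam' = P * Q := rfl
      have h2 : Q * P = Lm m N M z m lam' := by
        unfold Lm
        rw [show m - m = 0 from Nat.sub_self m]
        simp only [List.range'_zero, List.reverse_nil, List.map_nil, List.prod_nil, mul_one]
        have hcat : List.range' 2 (j - 1) ++ List.range' (j + 1) (m - j)
            = List.range' 2 (m - 1) := by
          have h := List.range'_append_1 (s := 2) (m := j - 1) (n := m - j)
          rw [show 2 + (j - 1) = j + 1 by omega] at h
          have hlen : (j - 1) + (m - j) = m - 1 := by omega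
          rw [hlen] at h
          exact h
        rw [hQ, hP, ← mul_assoc, ← List.prod_append, ← List.map_append,
          ← List.reverse_append, hcat]
      rw [h1, det_mul_sub_comm, h2]
    intro i j hi1 hi2 hj1 hj2 lam' _
    rw [key i hi1 hi2 lam', key j hj1 hj2 lam']
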